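/- The trace-norm resource generating power is monotone under composition with free channels: if M₁ and M₂ are channels that each map ℱ into ℱ, then for every channel N, Ω₁(M₁ ∘ N ∘ M₂) ≤ Ω₁(N). -/

import Mathlib

open scoped Kronecker ComplexOrder

variable {ι : Type*} [Fintype ι] [DecidableEq ι]

/-- A quantum state: positive semidefinite matrix of trace one. -/
def IsState (ρ : Matrix ι ι ℂ) : Prop := ρ.PosSemidef ∧ ρ.trace = 1

/-- The action of `id_n ⊗ N` on block matrices. -/
def idTensorMap (n : ℕ) (N : Matrix ι ι ℂ →ₗ[ℂ] Matrix ι ι ℂ)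
    (M : Matrix (Fin n × ι) (Fin n × ι) ℂ) : Matrix (Fin n × ι) (Fin n × ι) ℂ :=
  Matrix.of fun p q => N (Matrix.of fun k l => M (p.1, k) (q.1, l)) p.2 q.2

/-- A quantum channel: completely positive trace preserving linear map. -/
structure Channel (ι : Type*) [Fintype ι] [DecidableEq ι] where
  map : Matrix ι ι ℂ →ₗ[ℂ] Matrix ι ι ℂ
  cp : ∀ (n : ℕ) (M : Matrix (Fin n × ι) (Fin n × ι) ℂ), M.PosSemidef →
        (idTensorMap n map M).PosSemidef
  tp : ∀ A : Matrix ι ι ℂ, (map A).trace = A.trace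

/-- The trace norm ‖A‖₁ = Tr √(AᴴA). -/
noncomputable def traceNorm (A : Matrix ι ι ℂ) : ℝ :=
  ((Matrix.posSemidef_conjTranspose_mul_self A).1.eigenvectorUnitary.1 *
      Matrix.diagonal (((↑) : ℝ → ℂ) ∘ (√·) ∘ (Matrix.posSemidef_conjTranspose_mul_self A).1.eigenvalues) *
      (star (Matrix.posSemidef_conjTranspose_mul_self A).1.eigenvectorUnitary : Matrix ι ι ℂ)).trace.re

section Aux
open Matrix

open scoped MatrixOrder in
private lemma traceNorm_eq_sqrt (A : Matrix ι ι ℂ) : traceNorm A = (CFC.sqrt (Aᴴ * A)).trace.re := by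
  have h := Matrix.posSemidef_conjTranspose_mul_self A
  rw [CFC.sqrt_eq_cfc, cfc_nnreal_eq_real _ (Aᴴ * A) h.nonneg, h.1.cfc_eq, Matrix.IsHermitian.cfc, Unitary.conjStarAlgAut_apply]
  rw [traceNorm]
  simp only [Real.sqrt.eq_1]
  rfl

private lemma trace_re_nonneg {A : Matrix ι ι ℂ} (hA : A.PosSemidef) : 0 ≤ A.trace.re := by
  have h : ∀ i, 0 ≤ A i i := fun i => by
    exact hA.diag_nonneg
  have h2 : 0 ≤ A.trace := by
    unfold Matrix.trace
    exact Finset.sum_nonneg fun i _ => h i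
  simpa using (Complex.le_def.mp h2).1

open scoped MatrixOrder in
private lemma traceNorm_nonneg' (A : Matrix ι ι ℂ) : 0 ≤ traceNorm A :=
  (traceNorm_eq_sqrt A) ▸ trace_re_nonneg (CFC.sqrt_nonneg (Aᴴ * A)).posSemidef

open scoped MatrixOrder in
private lemma trace_mul_re_nonneg {A B : Matrix ι ι ℂ} (hA : A.PosSemidef)
    (hB : B.PosSemidef) : 0 ≤ (A * B).trace.re := by
  have hs : CFC.sqrt A * CFC.sqrt A = A := CFC.sqrt_mul_sqrt_self A hA.nonneg
  have h1 : ((CFC.sqrt A)ᴴ * B * CFC.sqrt A).trace = (A * B).trace := by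
    rw [(CFC.sqrt_nonneg A).posSemidef.1, Matrix.trace_mul_comm, ← Matrix.mul_assoc, hs]
  rw [← h1]
  exact trace_re_nonneg (hB.conjTranspose_mul_mul_same (CFC.sqrt A))

private lemma myConj_trace {u D : Matrix ι ι ℂ} (hu : star u * u = 1) :
    (u * D * star u).trace = D.trace := by
  rw [Matrix.trace_mul_cycle, hu, Matrix.one_mul]

private lemma myConj_mul {u : Matrix ι ι ℂ} (D E : Matrix ι ι ℂ) (hu : star u * u = 1) :
    (u * D * star u) * (u * E * star u) = u * (D * E) * star u := by
  simp only [Matrix.mul_assoc]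
  rw [← Matrix.mul_assoc (star u) u (E * star u), hu, Matrix.one_mul]

private lemma myConj_psd (u : Matrix ι ι ℂ) {d : ι → ℝ} (hd : ∀ i, 0 ≤ d i) :
    (u * Matrix.diagonal (fun i => ((d i : ℝ) : ℂ)) * star u).PosSemidef := by
  have h : (Matrix.diagonal (fun i => ((d i : ℝ) : ℂ))).PosSemidef :=
    Matrix.posSemidef_diagonal_iff.mpr fun i => Complex.zero_le_real.mpr (hd i)
  simpa [Matrix.star_eq_conjTranspose] using h.mul_mul_conjTranspose_same u

set_option maxHeartbeats 1000000 in
open scoped MatrixOrder in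
private lemma traceNorm_eigen {A : Matrix ι ι ℂ} (hA : A.IsHermitian) :
    traceNorm A = ∑ i, |hA.eigenvalues i| := by
  set u : Matrix ι ι ℂ := (hA.eigenvectorUnitary : Matrix ι ι ℂ) with hu_def
  have hu : star u * u = 1 := Matrix.mem_unitaryGroup_iff'.mp hA.eigenvectorUnitary.2
  have hspec : A = u * Matrix.diagonal (RCLike.ofReal ∘ hA.eigenvalues) * star u :=
    hA.spectral_theorem
  set S : Matrix ι ι ℂ := u * Matrix.diagonal (fun i => ((|hA.eigenvalues i| : ℝ) : ℂ)) * star u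
    with hS_def
  have hS : S.PosSemidef := myConj_psd u fun i => abs_nonneg _
  have hDD : Matrix.diagonal (fun i => ((|hA.eigenvalues i| : ℝ) : ℂ)) *
      Matrix.diagonal (fun i => ((|hA.eigenvalues i| : ℝ) : ℂ)) =
      Matrix.diagonal (RCLike.ofReal ∘ hA.eigenvalues) *
      Matrix.diagonal (RCLike.ofReal ∘ hA.eigenvalues) := by
    rw [Matrix.diagonal_mul_diagonal, Matrix.diagonal_mul_diagonal]
    refine congrArg Matrix.diagonal (funext fun i => ?_)
    simp only [Pi.mul_apply, Function.comp_apply]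
    rw [show ((|hA.eigenvalues i| : ℝ) : ℂ) = RCLike.ofReal |hA.eigenvalues i| from rfl,
      ← RCLike.ofReal_mul, ← RCLike.ofReal_mul, abs_mul_abs_self]
  have hsq : S ^ 2 = Aᴴ * A := by
    calc S ^ 2 = u * (Matrix.diagonal (fun i => ((|hA.eigenvalues i| : ℝ) : ℂ)) *
        Matrix.diagonal (fun i => ((|hA.eigenvalues i| : ℝ) : ℂ))) * star u := by
          rw [pow_two, hS_def, myConj_mul _ _ hu]
      _ = u * (Matrix.diagonal (RCLike.ofReal ∘ hA.eigenvalues) *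
        Matrix.diagonal (RCLike.ofReal ∘ hA.eigenvalues)) * star u := by rw [hDD]
      _ = (u * Matrix.diagonal (RCLike.ofReal ∘ hA.eigenvalues) * star u) *
        (u * Matrix.diagonal (RCLike.ofReal ∘ hA.eigenvalues) * star u) := (myConj_mul _ _ hu).symm
      _ = A * A := by rw [← hspec]
      _ = Aᴴ * A := by rw [hA.eq]
  have heq := CFC.sqrt_unique (a := Aᴴ * A) (by rw [← pow_two]; exact hsq) hS.nonneg
  rw [traceNorm_eq_sqrt, heq, hS_def, myConj_trace hu, Matrix.trace_diagonal]
  rw [Complex.re_sum]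
  norm_num

private lemma traceNorm_sub_le {X Y : Matrix ι ι ℂ} (hX : X.PosSemidef) (hY : Y.PosSemidef) :
    traceNorm (X - Y) ≤ X.trace.re + Y.trace.re := by
  have hA : (X - Y).IsHermitian := hX.1.sub hY.1
  set u : Matrix ι ι ℂ := (hA.eigenvectorUnitary : Matrix ι ι ℂ) with hu_def
  have hu : star u * u = 1 := Matrix.mem_unitaryGroup_iff'.mp hA.eigenvectorUnitary.2
  have huu : u * star u = 1 := Matrix.mem_unitaryGroup_iff.mp hA.eigenvectorUnitary.2
  have hspec : X - Y = u * Matrix.diagonal (RCLike.ofReal ∘ hA.eigenvalues) * star u :=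
    hA.spectral_theorem
  set s : ι → ℝ := fun i => if 0 ≤ hA.eigenvalues i then 1 else -1 with hs_def
  set W : Matrix ι ι ℂ := u * Matrix.diagonal (fun i => ((s i : ℝ) : ℂ)) * star u with hW_def
  have hWA : (W * (X - Y)).trace.re = ∑ i, |hA.eigenvalues i| := by
    rw [show W * (X - Y) = W * (u * Matrix.diagonal (RCLike.ofReal ∘ hA.eigenvalues) * star u)
      from by rw [← hspec]]
    rw [hW_def, myConj_mul _ _ hu, myConj_trace hu, Matrix.diagonal_mul_diagonal,
      Matrix.trace_diagonal, Complex.re_sum]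
    refine Finset.sum_congr rfl fun i _ => ?_
    have hc : ((s i : ℝ) : ℂ) * (RCLike.ofReal ∘ hA.eigenvalues) i
        = ((s i * hA.eigenvalues i : ℝ) : ℂ) := by
      simp only [Function.comp_apply]
      rw [show (RCLike.ofReal (hA.eigenvalues i) : ℂ) = ((hA.eigenvalues i : ℝ) : ℂ) from rfl,
        Complex.ofReal_mul]
    rw [hc, Complex.ofReal_re, hs_def]
    by_cases h : 0 ≤ hA.eigenvalues i
    · simp [h, abs_of_nonneg h]
    · push_neg at h
      simp [not_le.mpr h, abs_of_neg h]
  have hdiag : ∀ (d : ι → ℝ), (1 : Matrix ι ι ℂ) - u * Matrix.diagonal (fun i => ((d i : ℝ) : ℂ)) * star u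
      = u * Matrix.diagonal (fun i => ((1 - d i : ℝ) : ℂ)) * star u := by
    intro d
    have h1 : (1 : Matrix ι ι ℂ) = u * Matrix.diagonal (fun _ => (1 : ℂ)) * star u := by
      rw [Matrix.diagonal_one, Matrix.mul_one, huu]
    rw [h1, ← Matrix.sub_mul, ← Matrix.mul_sub, Matrix.diagonal_sub]
    congr 2
    funext i
    push_cast
    ring
  have hdiag' : ∀ (d : ι → ℝ), (1 : Matrix ι ι ℂ) + u * Matrix.diagonal (fun i => ((d i : ℝ) : ℂ)) * star u
      = u * Matrix.diagonal (fun i => ((1 + d i : ℝ) : ℂ)) * star u := by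
    intro d
    have h1 : (1 : Matrix ι ι ℂ) = u * Matrix.diagonal (fun _ => (1 : ℂ)) * star u := by
      rw [Matrix.diagonal_one, Matrix.mul_one, huu]
    rw [h1, ← Matrix.add_mul, ← Matrix.mul_add, Matrix.diagonal_add]
    congr 2
    funext i
    push_cast
    ring
  have hW1 : ((1 : Matrix ι ι ℂ) - W).PosSemidef := by
    rw [hW_def, hdiag s]
    refine myConj_psd u fun i => ?_
    rw [hs_def]
    by_cases h : 0 ≤ hA.eigenvalues i <;> simp [h] <;> norm_num
  have hW2 : ((1 : Matrix ι ι ℂ) + W).PosSemidef := by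
    rw [hW_def, hdiag' s]
    refine myConj_psd u fun i => ?_
    rw [hs_def]
    by_cases h : 0 ≤ hA.eigenvalues i <;> simp [h] <;> norm_num
  have hbX : (W * X).trace.re ≤ X.trace.re := by
    have h0 := trace_mul_re_nonneg hW1 hX
    rw [Matrix.sub_mul, Matrix.one_mul, Matrix.trace_sub, Complex.sub_re] at h0
    linarith
  have hbY : -Y.trace.re ≤ (W * Y).trace.re := by
    have h0 := trace_mul_re_nonneg hW2 hY
    rw [Matrix.add_mul, Matrix.one_mul, Matrix.trace_add, Complex.add_re] at h0
    linarith
  have hsplit : (W * (X - Y)).trace.re = (W * X).trace.re - (W * Y).trace.re := by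
    rw [Matrix.mul_sub, Matrix.trace_sub, Complex.sub_re]
  have htn : traceNorm (X - Y) = ∑ i, |hA.eigenvalues i| := traceNorm_eigen hA
  rw [htn, ← hWA, hsplit]
  linarith

private lemma traceNorm_map_le (Φ : Matrix ι ι ℂ →ₗ[ℂ] Matrix ι ι ℂ)
    (hpos : ∀ {B : Matrix ι ι ℂ}, B.PosSemidef → (Φ B).PosSemidef)
    (htp : ∀ B : Matrix ι ι ℂ, (Φ B).trace = B.trace)
    {A : Matrix ι ι ℂ} (hA : A.IsHermitian) : traceNorm (Φ A) ≤ traceNorm A := by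
  set u : Matrix ι ι ℂ := (hA.eigenvectorUnitary : Matrix ι ι ℂ) with hu_def
  have hu : star u * u = 1 := Matrix.mem_unitaryGroup_iff'.mp hA.eigenvectorUnitary.2
  have hspec : A = u * Matrix.diagonal (RCLike.ofReal ∘ hA.eigenvalues) * star u :=
    hA.spectral_theorem
  set P : Matrix ι ι ℂ :=
    u * Matrix.diagonal (fun i => ((max (hA.eigenvalues i) 0 : ℝ) : ℂ)) * star u with hP_def
  set Q : Matrix ι ι ℂ :=
    u * Matrix.diagonal (fun i => ((max (-hA.eigenvalues i) 0 : ℝ) : ℂ)) * star u with hQ_def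
  have hP : P.PosSemidef := myConj_psd u fun i => le_max_right _ _
  have hQ : Q.PosSemidef := myConj_psd u fun i => le_max_right _ _
  have hPQ : P - Q = A := by
    rw [hP_def, hQ_def, ← Matrix.sub_mul, ← Matrix.mul_sub, Matrix.diagonal_sub]
    rw [show (fun i => ((max (hA.eigenvalues i) 0 : ℝ) : ℂ) -
        ((max (-hA.eigenvalues i) 0 : ℝ) : ℂ))
        = (RCLike.ofReal ∘ hA.eigenvalues) from funext fun i => by
      simp only [Function.comp_apply]
      rw [show (RCLike.ofReal (hA.eigenvalues i) : ℂ) = ((hA.eigenvalues i : ℝ) : ℂ) from rfl,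
        ← Complex.ofReal_sub, max_zero_sub_max_neg_zero_eq_self]]
    exact hspec.symm
  have htrP : P.trace.re = ∑ i, max (hA.eigenvalues i) 0 := by
    rw [hP_def, myConj_trace hu, Matrix.trace_diagonal, Complex.re_sum]
    exact Finset.sum_congr rfl fun i _ => Complex.ofReal_re _
  have htrQ : Q.trace.re = ∑ i, max (-hA.eigenvalues i) 0 := by
    rw [hQ_def, myConj_trace hu, Matrix.trace_diagonal, Complex.re_sum]
    exact Finset.sum_congr rfl fun i _ => Complex.ofReal_re _
  have htn : traceNorm A = P.trace.re + Q.trace.re := by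
    rw [traceNorm_eigen hA, htrP, htrQ, ← Finset.sum_add_distrib]
    refine Finset.sum_congr rfl fun i _ => ?_
    rcases le_total 0 (hA.eigenvalues i) with h | h
    · rw [abs_of_nonneg h, max_eq_left h, max_eq_right (by linarith)]
      ring
    · rw [abs_of_nonpos h, max_eq_right h, max_eq_left (by linarith)]
      ring
  have hmap : Φ A = Φ P - Φ Q := by rw [← hPQ, map_sub]
  calc traceNorm (Φ A) = traceNorm (Φ P - Φ Q) := by rw [hmap]
    _ ≤ (Φ P).trace.re + (Φ Q).trace.re := traceNorm_sub_le (hpos hP) (hpos hQ)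
    _ = P.trace.re + Q.trace.re := by rw [htp, htp]
    _ = traceNorm A := htn.symm

end Aux

/-- Trace-norm resource measure ω₁. -/
noncomputable def omega1 (F : Set (Matrix ι ι ℂ)) (ρ : Matrix ι ι ℂ) : ℝ :=
  (1/2) * sInf ((fun σ => traceNorm (ρ - σ)) '' F)

/-- Trace-norm resource generating power Ω₁. -/
noncomputable def genPower1 (F : Set (Matrix ι ι ℂ)) (N : Matrix ι ι ℂ → Matrix ι ι ℂ) : ℝ :=
  sSup ((fun ρ => omega1 F (N ρ)) '' F)

/-- Trace-norm resource increasing power Ω̃₁. -/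
noncomputable def incPower1 (F : Set (Matrix ι ι ℂ)) (N : Matrix ι ι ℂ → Matrix ι ι ℂ) : ℝ :=
  sSup ((fun ρ => omega1 F (N ρ) - omega1 F ρ) '' {ρ | IsState ρ})

/-- Holevo–Helstrom success probability of discriminating two channels with probe `ρ`. -/
noncomputable def psuccPair (N M : Matrix ι ι ℂ → Matrix ι ι ℂ) (ρ : Matrix ι ι ℂ) : ℝ :=
  1/2 + (1/4) * traceNorm (N ρ - M ρ)

/-- Success probability of discriminating `N` from the set of channels `Free` with probe `ρ`. -/
noncomputable def psuccChan (N : Matrix ι ι ℂ → Matrix ι ι ℂ) (Free : Set (Channel ι))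
    (ρ : Matrix ι ι ℂ) : ℝ :=
  sInf ((fun M : Channel ι => psuccPair N (⇑M.map) ρ) '' Free)

/-- Maximum success probability of discriminating `N` from `Free` using probes from `F`. -/
noncomputable def psuccFF (N : Matrix ι ι ℂ → Matrix ι ι ℂ) (Free : Set (Channel ι))
    (F : Set (Matrix ι ι ℂ)) : ℝ :=
  sSup ((fun ρ => psuccChan N Free ρ) '' F)


section Aux2
open Matrix

private lemma chan_psd (C : Channel ι) {A : Matrix ι ι ℂ} (hA : A.PosSemidef) :
    (C.map A).PosSemidef := by
  have h := C.cp 1 (A.submatrix Prod.snd Prod.snd) (hA.submatrix _)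
  have he : C.map A = (idTensorMap 1 C.map (A.submatrix Prod.snd Prod.snd)).submatrix
      (fun i => ((0 : Fin 1), i)) (fun i => ((0 : Fin 1), i)) := rfl
  rw [he]
  exact h.submatrix _

private lemma chan_state (C : Channel ι) {A : Matrix ι ι ℂ} (h : IsState A) :
    IsState (C.map A) := ⟨chan_psd C h.1, by rw [C.tp, h.2]⟩

private lemma traceNorm_chan_le (C : Channel ι) {A : Matrix ι ι ℂ} (hA : A.IsHermitian) :
    traceNorm (C.map A) ≤ traceNorm A :=
  traceNorm_map_le C.map (fun hB => chan_psd C hB) C.tp hA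

private lemma omega1_le_half_traceNorm (F : Set (Matrix ι ι ℂ)) {σ₀ : Matrix ι ι ℂ}
    (ρ : Matrix ι ι ℂ) (hσ₀ : σ₀ ∈ F) : omega1 F ρ ≤ (1/2) * traceNorm (ρ - σ₀) := by
  unfold omega1
  have hb : BddBelow ((fun σ => traceNorm (ρ - σ)) '' F) :=
    ⟨0, by rintro _ ⟨σ, _, rfl⟩; exact traceNorm_nonneg' _⟩
  have h := csInf_le hb (Set.mem_image_of_mem _ hσ₀)
  linarith

private lemma omega1_contract (F : Set (Matrix ι ι ℂ)) (hFne : F.Nonempty)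
    (hFstate : ∀ ρ ∈ F, IsState ρ) (C : Channel ι) (hC : ∀ ρ ∈ F, C.map ρ ∈ F)
    {τ : Matrix ι ι ℂ} (hτ : IsState τ) : omega1 F (C.map τ) ≤ omega1 F τ := by
  unfold omega1
  have h2 : sInf ((fun σ => traceNorm (C.map τ - σ)) '' F)
      ≤ sInf ((fun σ => traceNorm (τ - σ)) '' F) := by
    apply le_csInf (hFne.image _)
    rintro b ⟨σ, hσ, rfl⟩
    have hb : BddBelow ((fun σ => traceNorm (C.map τ - σ)) '' F) :=
      ⟨0, by rintro _ ⟨σ', _, rfl⟩; exact traceNorm_nonneg' _⟩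
    calc sInf ((fun σ => traceNorm (C.map τ - σ)) '' F)
        ≤ traceNorm (C.map τ - C.map σ) := csInf_le hb ⟨C.map σ, hC σ hσ, rfl⟩
      _ = traceNorm (C.map (τ - σ)) := by rw [map_sub]
      _ ≤ traceNorm (τ - σ) := traceNorm_chan_le C (hτ.1.1.sub (hFstate σ hσ).1.1)
  linarith

end Aux2

/-- monotonicity of Ω₁ under left and right composition with free channels. -/
theorem stmt4
    (F : Set (Matrix ι ι ℂ)) (hFne : F.Nonempty) (hFstate : ∀ ρ ∈ F, IsState ρ)
    (hFconv : Convex ℝ F) (hFclosed : IsClosed F)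
    (N M₁ M₂ : Channel ι)
    (hM₁ : ∀ ρ ∈ F, M₁.map ρ ∈ F) (hM₂ : ∀ ρ ∈ F, M₂.map ρ ∈ F) :
    genPower1 F (fun ρ => M₁.map (N.map (M₂.map ρ))) ≤ genPower1 F (⇑N.map) := by
  obtain ⟨σ₀, hσ₀⟩ := hFne
  have hFne' : F.Nonempty := ⟨σ₀, hσ₀⟩
  have hbound : ∀ ρ ∈ F, omega1 F (N.map ρ) ≤ 1 := by
    intro ρ hρ
    have hNρ : IsState (N.map ρ) := chan_state N (hFstate ρ hρ)
    have h1 := omega1_le_half_traceNorm F (N.map ρ) hσ₀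
    have h2 := traceNorm_sub_le hNρ.1 (hFstate σ₀ hσ₀).1
    have h3 : (N.map ρ).trace.re = 1 := by rw [hNρ.2]; norm_num
    have h4 : σ₀.trace.re = 1 := by rw [(hFstate σ₀ hσ₀).2]; norm_num
    linarith
  have hbdd : BddAbove ((fun ρ => omega1 F (N.map ρ)) '' F) :=
    ⟨1, by rintro _ ⟨ρ, hρ, rfl⟩; exact hbound ρ hρ⟩
  apply csSup_le (hFne'.image _)
  rintro _ ⟨ρ, hρ, rfl⟩
  have hτ : IsState (N.map (M₂.map ρ)) := chan_state N (hFstate _ (hM₂ ρ hρ))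
  calc omega1 F (M₁.map (N.map (M₂.map ρ)))
      ≤ omega1 F (N.map (M₂.map ρ)) := omega1_contract F hFne' hFstate M₁ hM₁ hτ
    _ ≤ genPower1 F (⇑N.map) := le_csSup hbdd ⟨M₂.map ρ, hM₂ ρ hρ, rfl⟩
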